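/- Let D̂ be a Hermitian positive semidefinite complex matrix on ℂ^{d} ⊗ ℂ^{d}, and let Ê = Tr_A(D̂) have spectral decomposition Ê = Û diag(ê_1, …, ê_d) Û† with Û unitary, ê_1 ≥ ⋯ ≥ ê_c > 0 and ê_{c+1} = ⋯ = ê_d = 0. Fix a real number N ≥ 1 and define Ē = Û diag(ē_1, …, ē_d) Û† with ē_i = ê_i for 1 ≤ i ≤ c and ē_i = ê_c/N for c+1 ≤ i ≤ d, and Ẽ = Û diag(ẽ_1, …, ẽ_d) Û† with ẽ_i = min(ē_i, 1). Then X̂ = (I_d ⊗ Ẽ^{1/2} Ē^{-1/2}) D̂ (I_d ⊗ Ẽ^{1/2} Ē^{-1/2})† is Hermitian positive semidefinite and satisfies Tr_A(X̂) ≤ I_d in the Loewner order (i.e., I_d − Tr_A(X̂) is positive semidefinite). -/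
import Mathlib
open Matrix Kronecker ComplexOrder

noncomputable def trA {d : ℕ} (X : Matrix (Fin d × Fin d) (Fin d × Fin d) ℂ) :
    Matrix (Fin d) (Fin d) ℂ :=
  Matrix.of fun j j' => ∑ i, X (i, j) (i, j')

lemma trA_conj {d : ℕ} (D : Matrix (Fin d × Fin d) (Fin d × Fin d) ℂ)
    (T : Matrix (Fin d) (Fin d) ℂ) :
    trA (((1 : Matrix (Fin d) (Fin d) ℂ) ⊗ₖ T) * D *
        ((1 : Matrix (Fin d) (Fin d) ℂ) ⊗ₖ T)ᴴ) = T * trA D * Tᴴ := by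
  ext j j'
  simp only [trA, Matrix.of_apply, Matrix.mul_apply, Matrix.conjTranspose_apply,
    kroneckerMap_apply, Matrix.one_apply, Fintype.sum_prod_type,
    Finset.sum_mul, Finset.mul_sum, apply_ite (star : ℂ → ℂ), star_zero, star_one,
    ite_mul, mul_ite, zero_mul, mul_zero, one_mul, mul_one,
    Finset.sum_ite_irrel, Finset.sum_const_zero,
    Finset.sum_ite_eq, Finset.sum_ite_eq', Finset.mem_univ, if_true]
  rw [Finset.sum_comm]
  refine Finset.sum_congr rfl fun b _ => ?_
  rw [Finset.sum_comm]

theorem tss_nontp_estimate {d : ℕ}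
    (Dhat : Matrix (Fin d × Fin d) (Fin d × Fin d) ℂ) (hDhat : Dhat.PosSemidef)
    (U : Matrix (Fin d) (Fin d) ℂ) (hU : U ∈ Matrix.unitaryGroup (Fin d) ℂ)
    (e : Fin d → ℝ)
    (hE : trA Dhat = U * Matrix.diagonal (fun i => (e i : ℂ)) * Uᴴ)
    (hdec : ∀ i j : Fin d, i ≤ j → e j ≤ e i)
    (c : ℕ) (hc1 : 1 ≤ c) (hcd : c ≤ d)
    (hpos : ∀ i : Fin d, (i : ℕ) < c → 0 < e i)
    (hzero : ∀ i : Fin d, c ≤ (i : ℕ) → e i = 0)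
    (N : ℝ) (hN : 1 ≤ N)
    (ebar : Fin d → ℝ)
    (hebar : ∀ i : Fin d, ebar i =
      if (i : ℕ) < c then e i else e ⟨c - 1, by omega⟩ / N)
    (etil : Fin d → ℝ) (hetil : ∀ i, etil i = min (ebar i) 1)
    (T : Matrix (Fin d) (Fin d) ℂ)
    (hT : T = U * Matrix.diagonal
        (fun i => ((Real.sqrt (etil i) / Real.sqrt (ebar i) : ℝ) : ℂ)) * Uᴴ)
    (Xhat : Matrix (Fin d × Fin d) (Fin d × Fin d) ℂ)
    (hXhat : Xhat = ((1 : Matrix (Fin d) (Fin d) ℂ) ⊗ₖ T) * Dhat *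
        ((1 : Matrix (Fin d) (Fin d) ℂ) ⊗ₖ T)ᴴ) :
    Xhat.PosSemidef ∧ ((1 : Matrix (Fin d) (Fin d) ℂ) - trA Xhat).PosSemidef := by
  have hUU : Uᴴ * U = 1 := by
    have := Matrix.mem_unitaryGroup_iff'.mp hU
    simpa [Matrix.star_eq_conjTranspose] using this
  have hUU' : U * Uᴴ = 1 := by
    have := Matrix.mem_unitaryGroup_iff.mp hU
    simpa [Matrix.star_eq_conjTranspose] using this
  set t : Fin d → ℝ := fun i => Real.sqrt (etil i) / Real.sqrt (ebar i) with ht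
  constructor
  · rw [hXhat]
    exact hDhat.mul_mul_conjTranspose_same _
  -- key conjugation product
  have hmul : ∀ A B : Matrix (Fin d) (Fin d) ℂ,
      (U * A * Uᴴ) * (U * B * Uᴴ) = U * (A * B) * Uᴴ := by
    intro A B
    simp only [Matrix.mul_assoc]
    rw [← Matrix.mul_assoc Uᴴ U, hUU, Matrix.one_mul]
  have hTH : Tᴴ = U * Matrix.diagonal (fun i => ((t i : ℝ) : ℂ)) * Uᴴ := by
    rw [hT]
    simp [Matrix.conjTranspose_mul, Matrix.diagonal_conjTranspose, Matrix.mul_assoc,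
      Pi.star_def, Complex.star_def, Complex.conj_ofReal, ht, Complex.ofReal_div]
  have htrX : trA Xhat = U * Matrix.diagonal (fun i => ((t i * e i * t i : ℝ) : ℂ)) * Uᴴ := by
    rw [hXhat, trA_conj, hE, hTH, hT, hmul, hmul, Matrix.diagonal_mul_diagonal,
      Matrix.diagonal_mul_diagonal]
    congr 1
    congr 1
    congr 1
    funext i
    push_cast [ht]
    ring
  have hkey : ∀ i : Fin d, t i * e i * t i ≤ 1 := by
    intro i
    by_cases hi : (i : ℕ) < c
    · have he : ebar i = e i := by rw [hebar i]; simp [hi]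
      have hep : 0 < e i := hpos i hi
      have hetnn : 0 ≤ etil i := by
        rw [hetil i, he]; positivity
      have : t i * e i * t i = etil i / ebar i * e i := by
        rw [ht]
        have h1 : Real.sqrt (etil i) / Real.sqrt (ebar i) *
            (Real.sqrt (etil i) / Real.sqrt (ebar i)) = etil i / ebar i := by
          rw [div_mul_div_comm, Real.mul_self_sqrt hetnn, Real.mul_self_sqrt (by rw [he]; positivity)]
        calc (Real.sqrt (etil i) / Real.sqrt (ebar i)) * e i *
              (Real.sqrt (etil i) / Real.sqrt (ebar i))
            = (Real.sqrt (etil i) / Real.sqrt (ebar i) *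
              (Real.sqrt (etil i) / Real.sqrt (ebar i))) * e i := by ring
          _ = etil i / ebar i * e i := by rw [h1]
      rw [this, he, div_mul_cancel₀ _ (ne_of_gt hep), hetil i, he]
      exact min_le_right _ _
    · have he0 : e i = 0 := hzero i (le_of_not_gt hi)
      simp [he0]
  have hpsd : (Matrix.diagonal (fun i => ((1 - t i * e i * t i : ℝ) : ℂ))).PosSemidef := by
    refine Matrix.posSemidef_diagonal_iff.mpr fun i => ?_
    rw [Complex.zero_le_real]
    linarith [hkey i]
  have h1 : (1 : Matrix (Fin d) (Fin d) ℂ) - trA Xhat =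
      U * Matrix.diagonal (fun i => ((1 - t i * e i * t i : ℝ) : ℂ)) * Uᴴ := by
    rw [htrX]
    have : (1 : Matrix (Fin d) (Fin d) ℂ) = U * 1 * Uᴴ := by
      rw [Matrix.mul_one, hUU']
    rw [this]
    rw [← Matrix.sub_mul, ← Matrix.mul_sub]
    congr 1
    congr 1
    rw [← Matrix.diagonal_one, Matrix.diagonal_sub]
    congr 1
    funext i
    push_cast
    ring
  rw [h1]
  have := hpsd.mul_mul_conjTranspose_same U
  simpa [Matrix.mul_assoc] using this
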